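/- Consider the Bayesian game setup and fix a player i. Suppose Assumptions 3.1 and 3.2 hold. Then for every 1 ≤ p ≤ ∞ and all measurable rivals' strategy profiles f_{-i} and g_{-i}, the optimal response 𝒜*_i(f_{-i}, θ_i) := argmax_{a_i∈𝒜_i} ϑ_i(a_i, f_{-i}, θ_i) satisfies the blockwise Lipschitz estimate ‖𝒜*_i(f_{-i}, ·) − 𝒜*_i(g_{-i}, ·)‖_{L^p(η_i)} ≤ Σ_{j≠i} (τ_{ij}/σ_i) ‖f_j − g_j‖_{L^p(η_j)}. -/

import Mathlib

open MeasureTheory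
open scoped InnerProductSpace ENNReal NNReal

noncomputable section

/-- The type space of player `i` : a subset of `ℝ^{d_i}` with the Euclidean norm. -/
abbrev Ty (n : ℕ) (d : Fin n → ℕ) (i : Fin n) : Type := EuclideanSpace ℝ (Fin (d i))

/-- The action space of player `i` : a subset of `ℝ^{z_i}` with the Euclidean norm. -/
abbrev Ac (n : ℕ) (z : Fin n → ℕ) (i : Fin n) : Type := EuclideanSpace ℝ (Fin (z i))

/-- The space `Θ_{-i}` of type profiles of the rivals of player `i`,
equipped with the Euclidean (`ℓ²`) norm. -/
abbrev Rv (n : ℕ) (d : Fin n → ℕ) (i : Fin n) : Type :=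
  PiLp 2 (fun j : {j : Fin n // j ≠ i} => EuclideanSpace ℝ (Fin (d j.val)))

/-- The space `𝒜_{-i}` of action profiles of the rivals of player `i`. -/
abbrev RvA (n : ℕ) (z : Fin n → ℕ) (i : Fin n) : Type :=
  ∀ j : {j : Fin n // j ≠ i}, EuclideanSpace ℝ (Fin (z j.val))

instance (n : ℕ) (d : Fin n → ℕ) (i : Fin n) : MeasureSpace (Rv n d i) :=
  { toMeasurableSpace := inferInstance
    volume := Measure.map (WithLp.toLp 2)
      (volume : Measure (∀ j : {j : Fin n // j ≠ i}, EuclideanSpace ℝ (Fin (d j.val)))) }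

/-- The rivals' actions `f_{-i}(θ_{-i})` induced by a strategy profile `f`. -/
def rivalsAct (n : ℕ) (d z : Fin n → ℕ) (i : Fin n)
    (f : ∀ j, Ty n d j → Ac n z j) (t : Rv n d i) : RvA n z i :=
  fun j => f j.val (t j)

/-- `f` is a strategy profile: each `f_j : Θ_j → 𝒜_j` is measurable. -/
def IsStrat (n : ℕ) (d z : Fin n → ℕ) (Θ : ∀ j, Set (Ty n d j))
    (𝒜 : ∀ j, Set (Ac n z j)) (f : ∀ j, Ty n d j → Ac n z j) : Prop :=
  ∀ j, Measurable (f j) ∧ Set.MapsTo (f j) (Θ j) (𝒜 j)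

/-- The expected utility `ϑ_i(a_i, f_{-i}, θ_i)` of player `i`, the expectation
being taken with respect to the conditional distribution `η_i(·|θ_i)` of `θ_{-i}`. -/
def vth (n : ℕ) (d z : Fin n → ℕ) (i : Fin n)
    (u : Ac n z i → RvA n z i → Ty n d i → Rv n d i → ℝ)
    (cond : Ty n d i → Measure (Rv n d i))
    (a : Ac n z i) (f : ∀ j, Ty n d j → Ac n z j) (θi : Ty n d i) : ℝ :=
  ∫ t, u a (rivalsAct n d z i f t) θi t ∂(cond θi)

/-- Recombine an own type `θ_i` and a rival type profile `θ_{-i}` into a full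
type profile `θ = (θ_i, θ_{-i})`. -/
def recomb (n : ℕ) (d : Fin n → ℕ) (i : Fin n) (θi : Ty n d i) (t : Rv n d i)
    (j : Fin n) : Ty n d j :=
  if h : j = i then (by subst h; exact θi) else t ⟨j, h⟩


/-- Variational inequality at a maximizer over a convex set. -/
lemma aux_var_ineq {E : Type*} [NormedAddCommGroup E] [InnerProductSpace ℝ E]
    [CompleteSpace E] {s : Set E} (hs : Convex ℝ s) {φ : E → ℝ} {G : E} {a x : E}
    (ha : a ∈ s) (hx : x ∈ s) (hmax : ∀ y ∈ s, φ y ≤ φ a)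
    (hG : HasGradientAt φ G a) : ⟪G, x - a⟫_ℝ ≤ 0 := by
  have hmax' : IsMaxOn φ s a := hmax
  have hloc : IsLocalMaxOn φ s a := hmax'.localize
  have hfd : HasFDerivWithinAt φ ((InnerProductSpace.toDual ℝ E) G) s a :=
    hG.hasFDerivAt.hasFDerivWithinAt
  have htan : x - a ∈ posTangentConeAt s a :=
    sub_mem_posTangentConeAt_of_segment_subset (hs.segment_subset ha hx)
  have := hloc.hasFDerivWithinAt_nonpos hfd htan
  simpa [InnerProductSpace.toDual_apply_apply] using this

/-- Jensen's inequality for `ℝ≥0∞`-valued functions on a probability space. -/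
lemma aux_jensen {α : Type*} [MeasurableSpace α] (μ : Measure α) [IsProbabilityMeasure μ]
    {f : α → ℝ≥0∞} (hf : Measurable f) {r : ℝ} (hr : 1 ≤ r) :
    (∫⁻ x, f x ∂μ) ^ r ≤ ∫⁻ x, f x ^ r ∂μ := by
  rcases eq_or_lt_of_le hr with h1 | h1
  · simp [← h1]
  have hconj : r.HolderConjugate (Real.conjExponent r) :=
    Real.HolderConjugate.conjExponent h1
  have hr0 : r ≠ 0 := by linarith
  have hle : ∫⁻ x, f x ∂μ ≤ (∫⁻ x, f x ^ r ∂μ) ^ (1 / r) := by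
    have h := ENNReal.lintegral_mul_le_Lp_mul_Lq μ hconj hf.aemeasurable
      (aemeasurable_const (b := (1 : ℝ≥0∞)))
    simpa [measure_univ] using h
  calc (∫⁻ x, f x ∂μ) ^ r ≤ ((∫⁻ x, f x ^ r ∂μ) ^ (1 / r)) ^ r :=
        ENNReal.rpow_le_rpow hle (by linarith)
    _ = ∫⁻ x, f x ^ r ∂μ := by
        rw [← ENNReal.rpow_mul, one_div, inv_mul_cancel₀ hr0, ENNReal.rpow_one]

/-- **Theorem 3.1 (rival-strategy part): blockwise Lipschitz continuity of the
optimal response in the rivals' strategies, in `L^p(η_i)`.**  Under Assumptions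
3.1 and 3.2, for every `1 ≤ p ≤ ∞` and all strategy profiles `f_{-i}, g_{-i}`,
`‖𝒜*_i(f_{-i},·) − 𝒜*_i(g_{-i},·)‖_{L^p(η_i)} ≤ Σ_{j≠i} (τ_{ij}/σ_i)‖f_j − g_j‖_{L^p(η_j)}`. -/
theorem stmt_2
    (n : ℕ) (d z : Fin n → ℕ) (i : Fin n)
    (Θ : ∀ j, Set (Ty n d j)) (𝒜 : ∀ j, Set (Ac n z j))
    (hΘ : ∀ j, (Θ j).Nonempty ∧ IsCompact (Θ j) ∧ Convex ℝ (Θ j))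
    (h𝒜 : ∀ j, (𝒜 j).Nonempty ∧ IsCompact (𝒜 j) ∧ Convex ℝ (𝒜 j))
    -- the joint distribution η of the types, concentrated on Θ
    (η : Measure (∀ j, Ty n d j)) (hη : IsProbabilityMeasure η)
    (hηsupp : η {θ | ¬ ∀ j, θ j ∈ Θ j} = 0)
    -- the conditional distribution `η_i(·|θ_i)` and the disintegration of η
    (cond : Ty n d i → Measure (Rv n d i))
    (hprob : ∀ θi, IsProbabilityMeasure (cond θi))
    (hdisint : ∀ g : (∀ j, Ty n d j) → ℝ≥0∞, Measurable g →
      ∫⁻ θ, g θ ∂η =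
        ∫⁻ θi, ∫⁻ t, g (recomb n d i θi t) ∂(cond θi) ∂(η.map (fun θ => θ i)))
    (u : Ac n z i → RvA n z i → Ty n d i → Rv n d i → ℝ)
    -- Assumption 3.1(a)
    (hC1 : ContDiff ℝ 1 (fun p : Ac n z i × RvA n z i × Ty n d i × Rv n d i =>
      u p.1 p.2.1 p.2.2.1 p.2.2.2))
    -- Assumption 3.1(b): local integrable domination of `∇_{a_i}u_i`
    (hdom : ∀ f : ∀ j, Ty n d j → Ac n z j, IsStrat n d z Θ 𝒜 f →
      ∀ θi ∈ Θ i, ∀ ahat ∈ 𝒜 i, ∃ U : Set (Ac n z i), U ⊆ 𝒜 i ∧ IsClosed U ∧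
        U ∈ nhdsWithin ahat (𝒜 i) ∧ ∃ h : Rv n d i → ℝ, (∀ t, 0 ≤ h t) ∧
          Integrable h (cond θi) ∧ ∀ a ∈ U, ∀ t : Rv n d i,
            ‖gradient (fun b => u b (rivalsAct n d z i f t) θi t) a‖ ≤ h t)
    -- Assumption 3.1(b): differentiation under the integral sign
    (hexch : ∀ f : ∀ j, Ty n d j → Ac n z j, IsStrat n d z Θ 𝒜 f →
      ∀ θi ∈ Θ i, ∀ a : Ac n z i,
        Integrable (fun t => gradient (fun b => u b (rivalsAct n d z i f t) θi t) a)
          (cond θi) ∧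
        HasGradientAt (fun b => vth n d z i u cond b f θi)
          (∫ t, gradient (fun b => u b (rivalsAct n d z i f t) θi t) a ∂(cond θi)) a)
    -- Assumption 3.2(a): `σ_i`-strong concavity of `u_i` in `a_i`
    (σ : ℝ) (hσ : 0 < σ)
    (hconc : ∀ (ar : RvA n z i) (θi : Ty n d i) (t : Rv n d i),
      ∀ a' ∈ 𝒜 i, ∀ a'' ∈ 𝒜 i,
      ⟪gradient (fun b => u b ar θi t) a' - gradient (fun b => u b ar θi t) a'',
        a' - a''⟫_ℝ ≤ -σ * ‖a' - a''‖ ^ 2)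
    -- Assumption 3.2(b): blockwise Lipschitz continuity in rivals' actions
    (τ : Fin n → ℝ)
    (hτ : ∀ (ai : Ac n z i) (θi : Ty n d i) (t : Rv n d i),
      ∀ ar' ar'' : RvA n z i, (∀ j, ar' j ∈ 𝒜 j.val) → (∀ j, ar'' j ∈ 𝒜 j.val) →
      ‖gradient (fun b => u b ar' θi t) ai - gradient (fun b => u b ar'' θi t) ai‖ ≤
        ∑ j : {j : Fin n // j ≠ i}, τ j.val * ‖ar' j - ar'' j‖) :
    ∀ p : ℝ≥0∞, 1 ≤ p →
    ∀ f g : ∀ j, Ty n d j → Ac n z j, IsStrat n d z Θ 𝒜 f → IsStrat n d z Θ 𝒜 g →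
    ∀ bf bg : Ty n d i → Ac n z i,
      (∀ θi ∈ Θ i, bf θi ∈ 𝒜 i ∧
        ∀ x ∈ 𝒜 i, vth n d z i u cond x f θi ≤ vth n d z i u cond (bf θi) f θi) →
      (∀ θi ∈ Θ i, bg θi ∈ 𝒜 i ∧
        ∀ x ∈ 𝒜 i, vth n d z i u cond x g θi ≤ vth n d z i u cond (bg θi) g θi) →
      eLpNorm (fun θi => bf θi - bg θi) p (η.map (fun θ => θ i)) ≤
        ∑ j : {j : Fin n // j ≠ i}, ENNReal.ofReal (τ j.val / σ) *
          eLpNorm (fun x => f j.val x - g j.val x) p (η.map (fun θ => θ j.val)) := by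

  classical
  intro p hp f g hf hg bf bg hbf hbg
  have hp0 : p ≠ 0 := (zero_lt_one.trans_le hp).ne'
  set ηi : Measure (Ty n d i) := η.map (fun θ => θ i) with hηidef
  have hprojmeas : ∀ j : Fin n, Measurable (fun θ : ∀ k, Ty n d k => θ j) :=
    fun j => measurable_pi_apply j
  have hηiprob : IsProbabilityMeasure ηi :=
    Measure.isProbabilityMeasure_map (hprojmeas i).aemeasurable
  -- coefficients
  set c : {j : Fin n // j ≠ i} → ℝ := fun j => max (τ j.val / σ) 0 with hcdef
  have hc0 : ∀ j, 0 ≤ c j := fun j => le_max_right _ _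
  have hcoef : ∀ j, ENNReal.ofReal (τ j.val / σ) = ENNReal.ofReal (c j) := by
    intro j
    rcases le_total (τ j.val / σ) 0 with h | h
    · rw [ENNReal.ofReal_eq_zero.2 h]
      have : c j = 0 := max_eq_right h
      rw [this, ENNReal.ofReal_zero]
    · have : c j = τ j.val / σ := max_eq_left h
      rw [this]
  have hτc : ∀ j, τ j.val ≤ σ * c j := by
    intro j
    rcases le_total (τ j.val) 0 with h | h
    · exact h.trans (mul_nonneg hσ.le (hc0 j))
    · have hcj : c j = τ j.val / σ := max_eq_left (div_nonneg h hσ.le)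
      rw [hcj]
      field_simp
      exact le_rfl
  -- the comparison function S
  set S : (∀ k, Ty n d k) → ℝ :=
    fun θ => ∑ j : {j : Fin n // j ≠ i}, c j * ‖f j.val (θ j.val) - g j.val (θ j.val)‖
    with hSdef
  have hS0 : ∀ θ, 0 ≤ S θ :=
    fun θ => Finset.sum_nonneg fun j _ => mul_nonneg (hc0 j) (norm_nonneg _)
  have hSmeas : Measurable S := by
    apply Finset.measurable_sum
    intro j _
    exact measurable_const.mul
      (((hf j.val).1.sub (hg j.val).1).comp (hprojmeas j.val)).norm
  -- recomb facts
  have hrecomb_i : ∀ (θi : Ty n d i) (t : Rv n d i), recomb n d i θi t i = θi := by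
    intro θi t
    unfold recomb
    rw [dif_pos rfl]
  have hrecomb_ne : ∀ (θi : Ty n d i) (t : Rv n d i) (j : {j : Fin n // j ≠ i}),
      recomb n d i θi t j.val = t j := by
    intro θi t j
    unfold recomb
    rw [dif_neg j.prop]
  have hrecomb_meas : ∀ θi : Ty n d i,
      Measurable (fun t : Rv n d i => recomb n d i θi t) := by
    intro θi
    apply measurable_pi_lambda
    intro k
    rcases eq_or_ne k i with h | h
    · have heq : (fun t : Rv n d i => recomb n d i θi t k)
          = fun _ => recomb n d i θi 0 k := by
        cases h
        funext t
        unfold recomb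
        rw [dif_pos rfl, dif_pos rfl]
      rw [heq]; exact measurable_const
    · have : (fun t : Rv n d i => recomb n d i θi t k) = fun t => t ⟨k, h⟩ := by
        funext t
        unfold recomb
        rw [dif_neg h]
      rw [this]
      exact (measurable_pi_apply _).comp (WithLp.measurable_ofLp _ _)
  -- disintegration of null sets
  have hcondnull : ∀ N : Set (∀ k, Ty n d k), MeasurableSet N → η N = 0 →
      ∀ᵐ θi ∂ηi, cond θi {t | recomb n d i θi t ∈ N} = 0 := by
    intro N hN hN0
    set F : Ty n d i → ℝ≥0∞ := fun θi => cond θi {t | recomb n d i θi t ∈ N}ᶜ with hFdef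
    have hFle : ∀ θi, F θi ≤ 1 := by
      intro θi
      have := (hprob θi).measure_univ
      calc F θi ≤ cond θi Set.univ := measure_mono (Set.subset_univ _)
        _ = 1 := this
    have hFint : ∫⁻ θi, F θi ∂ηi = 1 := by
      have h1 := hdisint (Nᶜ.indicator 1) (measurable_one.indicator hN.compl)
      rw [lintegral_indicator_one hN.compl] at h1
      have h2 : η Nᶜ = 1 := (prob_compl_eq_one_iff hN).2 hN0
      have h3 : ∀ θi : Ty n d i,
          (∫⁻ t, Nᶜ.indicator 1 (recomb n d i θi t) ∂cond θi) = F θi := by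
        intro θi
        have heq : (fun t => Nᶜ.indicator (1 : (∀ k, Ty n d k) → ℝ≥0∞) (recomb n d i θi t))
            = Set.indicator ((fun t => recomb n d i θi t) ⁻¹' Nᶜ) 1 := by
          funext t
          by_cases h : recomb n d i θi t ∈ N <;> simp [Set.indicator, h]
        rw [heq, lintegral_indicator_one ((hrecomb_meas θi) hN.compl)]
        rfl
      rw [h2] at h1
      exact (lintegral_congr h3).symm.trans h1.symm
    obtain ⟨G, hGmeas, hGle, hGint⟩ := exists_measurable_le_lintegral_eq ηi F
    have hGle1 : ∀ θi, G θi ≤ 1 := fun θi => (hGle θi).trans (hFle θi)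
    have hGint1 : ∫⁻ θi, G θi ∂ηi = 1 := by rw [← hGint, hFint]
    have hsub : ∫⁻ θi, ((1 : ℝ≥0∞) - G θi) ∂ηi = 0 := by
      rw [lintegral_sub hGmeas (by rw [hGint1]; exact ENNReal.one_ne_top)
        (Filter.Eventually.of_forall hGle1)]
      rw [hGint1, lintegral_one, measure_univ, tsub_self]
    have hG1 : (fun θi => (1 : ℝ≥0∞) - G θi) =ᵐ[ηi] 0 :=
      (lintegral_eq_zero_iff (measurable_const.sub hGmeas)).1 hsub
    filter_upwards [hG1] with θi h1
    have h1' : (1 : ℝ≥0∞) - G θi = 0 := h1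
    have hGθ : G θi = 1 := le_antisymm (hGle1 θi) (tsub_eq_zero_iff_le.1 h1')
    have hFθ : F θi = 1 := le_antisymm (hFle θi) (hGθ ▸ hGle θi)
    have := (prob_compl_eq_zero_iff (μ := cond θi)
      ((hrecomb_meas θi) hN).compl).2 ?_
    · rwa [compl_compl] at this
    · exact hFθ
  -- bad type set
  set N₀ : Set (∀ k, Ty n d k) := {θ | ¬ ∀ j, θ j ∈ Θ j} with hN₀def
  have hN₀meas : MeasurableSet N₀ := by
    have : N₀ = (⋂ j, (fun θ : ∀ k, Ty n d k => θ j) ⁻¹' (Θ j))ᶜ := by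
      ext θ; simp [hN₀def]
    rw [this]
    exact (MeasurableSet.iInter fun j =>
      ((hΘ j).2.1.isClosed.measurableSet).preimage (hprojmeas j)).compl
  have hgood : ∀ᵐ θi ∂ηi, θi ∈ Θ i ∧ cond θi {t | recomb n d i θi t ∈ N₀} = 0 := by
    filter_upwards [hcondnull N₀ hN₀meas hηsupp] with θi h0
    refine ⟨?_, h0⟩
    by_contra hmem
    have huniv : {t : Rv n d i | recomb n d i θi t ∈ N₀} = Set.univ := by
      ext t
      simp only [Set.mem_setOf_eq, Set.mem_univ, iff_true, hN₀def]
      intro hall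
      exact hmem (by rw [← hrecomb_i θi t]; exact hall i)
    rw [huniv, measure_univ] at h0
    exact one_ne_zero h0
  -- the key pointwise estimate
  have hkey : ∀ᵐ θi ∂ηi, (‖bf θi - bg θi‖₊ : ℝ≥0∞) ≤
      ∫⁻ t, ENNReal.ofReal (S (recomb n d i θi t)) ∂cond θi := by
    filter_upwards [hgood] with θi hθig
    obtain ⟨hθi, hslice⟩ := hθig
    haveI := hprob θi
    obtain ⟨haf, hmaxf⟩ := hbf θi hθi
    obtain ⟨hag, hmaxg⟩ := hbg θi hθi
    set A : Ac n z i := bf θi with hAdef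
    set B : Ac n z i := bg θi with hBdef
    set φf : Ac n z i → Rv n d i → Ac n z i :=
      fun x t => gradient (fun bb => u bb (rivalsAct n d z i f t) θi t) x with hφfdef
    set φg : Ac n z i → Rv n d i → Ac n z i :=
      fun x t => gradient (fun bb => u bb (rivalsAct n d z i g t) θi t) x with hφgdef
    have hIf : ∀ x, Integrable (φf x) (cond θi) := fun x => (hexch f hf θi hθi x).1
    have hIg : ∀ x, Integrable (φg x) (cond θi) := fun x => (hexch g hg θi hθi x).1
    have hGf : ∀ x, HasGradientAt (fun y => vth n d z i u cond y f θi)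
        (∫ t, φf x t ∂cond θi) x := fun x => (hexch f hf θi hθi x).2
    have hGg : ∀ x, HasGradientAt (fun y => vth n d z i u cond y g θi)
        (∫ t, φg x t ∂cond θi) x := fun x => (hexch g hg θi hθi x).2
    set Gfa : Ac n z i := ∫ t, φf A t ∂cond θi with hGfadef
    set Gfb : Ac n z i := ∫ t, φf B t ∂cond θi with hGfbdef
    set Ggb : Ac n z i := ∫ t, φg B t ∂cond θi with hGgbdef
    have hVIf : ⟪Gfa, B - A⟫_ℝ ≤ 0 :=
      aux_var_ineq (h𝒜 i).2.2 haf hag hmaxf (hGf A)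
    have hVIg : ⟪Ggb, A - B⟫_ℝ ≤ 0 :=
      aux_var_ineq (h𝒜 i).2.2 hag haf hmaxg (hGg B)
    have hmono : ⟪Gfa - Gfb, A - B⟫_ℝ ≤ -σ * ‖A - B‖ ^ 2 := by
      have hsubi : Gfa - Gfb = ∫ t, (φf A t - φf B t) ∂cond θi :=
        (integral_sub (hIf A) (hIf B)).symm
      rw [hsubi]
      have h1 : ⟪∫ t, (φf A t - φf B t) ∂cond θi, A - B⟫_ℝ
          = ∫ t, ⟪A - B, φf A t - φf B t⟫_ℝ ∂cond θi := by
        rw [real_inner_comm]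
        exact (integral_inner ((hIf A).sub (hIf B)) (A - B)).symm
      rw [h1]
      calc ∫ t, ⟪A - B, φf A t - φf B t⟫_ℝ ∂cond θi
          = ∫ t, ⟪φf A t - φf B t, A - B⟫_ℝ ∂cond θi :=
            integral_congr_ae (Filter.Eventually.of_forall fun t => real_inner_comm _ _)
        _ ≤ ∫ _t, (-σ * ‖A - B‖ ^ 2) ∂cond θi := by
            apply integral_mono (((hIf A).sub (hIf B)).inner_const _) (integrable_const _)
            exact fun t => hconc (rivalsAct n d z i f t) θi t A haf B hag
        _ = -σ * ‖A - B‖ ^ 2 := by simp [measure_univ]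
    have hiq : σ * ‖A - B‖ ≤ ‖Gfb - Ggb‖ := by
      rcases eq_or_ne A B with hab | hab
      · rw [hab]; simp [norm_nonneg]
      have hn : 0 < ‖A - B‖ := norm_sub_pos_iff.2 hab
      have e2 : (0 : ℝ) ≤ ⟪Gfa, A - B⟫_ℝ := by
        have : A - B = -(B - A) := by abel
        rw [this, inner_neg_right]
        linarith [hVIf]
      have e4 : ⟪Gfb - Ggb, A - B⟫_ℝ ≤ ‖Gfb - Ggb‖ * ‖A - B‖ := real_inner_le_norm _ _
      rw [inner_sub_left] at hmono e4
      have h5 : σ * ‖A - B‖ * ‖A - B‖ ≤ ‖Gfb - Ggb‖ * ‖A - B‖ := by nlinarith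
      exact le_of_mul_le_mul_right h5 hn
    have hae : ∀ᵐ t ∂cond θi, ∀ j : {j : Fin n // j ≠ i}, t j ∈ Θ j.val := by
      rw [ae_iff]
      apply measure_mono_null ?_ hslice
      intro t ht
      simp only [Set.mem_setOf_eq] at ht ⊢
      rw [hN₀def]
      simp only [Set.mem_setOf_eq]
      intro hall
      apply ht
      intro j
      rw [← hrecomb_ne θi t j]
      exact hall j.val
    have hDle : ENNReal.ofReal ‖Gfb - Ggb‖ ≤
        ENNReal.ofReal σ * ∫⁻ t, ENNReal.ofReal (S (recomb n d i θi t)) ∂cond θi := by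
      have hsubint : Gfb - Ggb = ∫ t, (φf B t - φg B t) ∂cond θi :=
        (integral_sub (hIf B) (hIg B)).symm
      rw [hsubint, ofReal_norm]
      refine le_trans (enorm_integral_le_lintegral_enorm _) ?_
      rw [← lintegral_const_mul' _ _ ENNReal.ofReal_ne_top]
      apply lintegral_mono_ae
      filter_upwards [hae] with t ht
      have hτ' := hτ B θi t (rivalsAct n d z i f t) (rivalsAct n d z i g t)
        (fun j => (hf j.val).2 (ht j)) (fun j => (hg j.val).2 (ht j))
      have hsum : (∑ j : {j : Fin n // j ≠ i},
          τ j.val * ‖rivalsAct n d z i f t j - rivalsAct n d z i g t j‖)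
          ≤ σ * S (recomb n d i θi t) := by
        have hSv : S (recomb n d i θi t) = ∑ j : {j : Fin n // j ≠ i},
            c j * ‖f j.val (t j) - g j.val (t j)‖ := by
          rw [hSdef]
          exact Finset.sum_congr rfl fun j _ => by rw [hrecomb_ne θi t j]
        rw [hSv, Finset.mul_sum]
        apply Finset.sum_le_sum
        intro j _
        have : τ j.val * ‖rivalsAct n d z i f t j - rivalsAct n d z i g t j‖
            ≤ (σ * c j) * ‖rivalsAct n d z i f t j - rivalsAct n d z i g t j‖ :=
          mul_le_mul_of_nonneg_right (hτc j) (norm_nonneg _)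
        refine this.trans (le_of_eq ?_)
        rw [mul_assoc]
        rfl
      calc (↑‖φf B t - φg B t‖₊ : ℝ≥0∞)
          = ENNReal.ofReal ‖φf B t - φg B t‖ := (ofReal_norm _).symm
        _ ≤ ENNReal.ofReal (σ * S (recomb n d i θi t)) :=
            ENNReal.ofReal_le_ofReal (le_trans hτ' hsum)
        _ = ENNReal.ofReal σ * ENNReal.ofReal (S (recomb n d i θi t)) :=
            ENNReal.ofReal_mul hσ.le
    have hchain : ENNReal.ofReal σ * (↑‖A - B‖₊ : ℝ≥0∞) ≤
        ENNReal.ofReal σ * ∫⁻ t, ENNReal.ofReal (S (recomb n d i θi t)) ∂cond θi := by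
      calc ENNReal.ofReal σ * (↑‖A - B‖₊ : ℝ≥0∞)
          = ENNReal.ofReal (σ * ‖A - B‖) := by
            rw [ENNReal.ofReal_mul hσ.le, ofReal_norm]
            rfl
        _ ≤ ENNReal.ofReal ‖Gfb - Ggb‖ := ENNReal.ofReal_le_ofReal hiq
        _ ≤ _ := hDle
    exact (ENNReal.mul_le_mul_iff_right (ENNReal.ofReal_pos.2 hσ).ne' ENNReal.ofReal_ne_top).1 hchain
  -- the tail estimate : eLpNorm of S over η bounded by the sum of rivals' norms
  have htail : eLpNorm S p η ≤
      ∑ j : {j : Fin n // j ≠ i}, ENNReal.ofReal (τ j.val / σ) *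
        eLpNorm (fun x => f j.val x - g j.val x) p (η.map (fun θ => θ j.val)) := by
    have hrepr : S = ∑ j : {j : Fin n // j ≠ i},
        (fun θ : ∀ k, Ty n d k => c j * ‖f j.val (θ j.val) - g j.val (θ j.val)‖) := by
      funext θ
      rw [hSdef, Finset.sum_apply]
    have hstep1 : eLpNorm S p η ≤ ∑ j : {j : Fin n // j ≠ i},
        eLpNorm (fun θ : ∀ k, Ty n d k =>
          c j * ‖f j.val (θ j.val) - g j.val (θ j.val)‖) p η := by
      rw [hrepr]
      apply eLpNorm_sum_le _ hp
      intro j _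
      exact (measurable_const.mul
        (((hf j.val).1.sub (hg j.val).1).comp (hprojmeas j.val)).norm).aestronglyMeasurable
    refine hstep1.trans (Finset.sum_le_sum fun j _ => le_of_eq ?_)
    have e1 : (fun θ : ∀ k, Ty n d k => c j * ‖f j.val (θ j.val) - g j.val (θ j.val)‖)
        = (c j) • (fun θ : ∀ k, Ty n d k => ‖f j.val (θ j.val) - g j.val (θ j.val)‖) := rfl
    rw [e1, eLpNorm_const_smul, eLpNorm_norm]
    have e2 : eLpNorm (fun x => f j.val x - g j.val x) p (η.map (fun θ => θ j.val))
        = eLpNorm (fun θ : ∀ k, Ty n d k => f j.val (θ j.val) - g j.val (θ j.val)) p η := by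
      have := eLpNorm_map_measure (μ := η) (f := fun θ : ∀ k, Ty n d k => θ j.val)
        (g := fun x => f j.val x - g j.val x) (p := p)
        ((hf j.val).1.sub (hg j.val).1).aestronglyMeasurable (hprojmeas j.val).aemeasurable
      exact this
    rw [e2, hcoef j, ← Real.enorm_eq_ofReal (hc0 j)]
  -- the main estimate : eLpNorm over ηi bounded by eLpNorm of S over η
  have hmain : eLpNorm (fun θi => bf θi - bg θi) p ηi ≤ eLpNorm S p η := by
    rcases eq_or_ne p ∞ with hptop | hptop
    · subst hptop
      rw [eLpNorm_exponent_top, eLpNorm_exponent_top]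
      set C : ℝ≥0∞ := eLpNormEssSup S η with hCdef
      have haeS : ∀ᵐ θ ∂η, (‖S θ‖₊ : ℝ≥0∞) ≤ C := enorm_ae_le_eLpNormEssSup S η
      set N₁ : Set (∀ k, Ty n d k) := {θ | ¬ ((‖S θ‖₊ : ℝ≥0∞) ≤ C)} with hN₁def
      have hN₁meas : MeasurableSet N₁ := by
        have : N₁ = {θ | C < (‖S θ‖₊ : ℝ≥0∞)} := by
          ext θ; simp [hN₁def, not_le]
        rw [this]
        exact measurableSet_lt measurable_const hSmeas.nnnorm.coe_nnreal_ennreal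
      have hN₁0 : η N₁ = 0 := ae_iff.1 haeS
      have hkey' : ∀ᵐ θi ∂ηi, (↑‖bf θi - bg θi‖₊ : ℝ≥0∞) ≤ C := by
        filter_upwards [hkey, hcondnull N₁ hN₁meas hN₁0] with θi h1 h2
        haveI := hprob θi
        refine h1.trans ?_
        have hb : ∀ᵐ t ∂cond θi, ENNReal.ofReal (S (recomb n d i θi t)) ≤ C := by
          rw [ae_iff]
          apply measure_mono_null ?_ h2
          intro t ht
          simp only [Set.mem_setOf_eq] at ht ⊢
          rw [hN₁def]
          simp only [Set.mem_setOf_eq]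
          rw [← Real.enorm_eq_ofReal (hS0 _)] at ht
          exact ht
        calc ∫⁻ t, ENNReal.ofReal (S (recomb n d i θi t)) ∂cond θi
            ≤ ∫⁻ _t, C ∂cond θi := lintegral_mono_ae hb
          _ = C := by rw [lintegral_const, measure_univ, mul_one]
      exact essSup_le_of_ae_le _ hkey'
    · have hr1 : (1 : ℝ) ≤ p.toReal := by
        have := ENNReal.toReal_mono hptop hp
        simpa using this
      have hr0 : (0 : ℝ) ≤ p.toReal := by linarith
      rw [eLpNorm_eq_lintegral_rpow_enorm_toReal hp0 hptop,
        eLpNorm_eq_lintegral_rpow_enorm_toReal hp0 hptop]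
      apply ENNReal.rpow_le_rpow _ (by positivity)
      have hstep : ∫⁻ θi, (↑‖bf θi - bg θi‖₊ : ℝ≥0∞) ^ p.toReal ∂ηi
          ≤ ∫⁻ θi, ∫⁻ t, ENNReal.ofReal (S (recomb n d i θi t)) ^ p.toReal
            ∂cond θi ∂ηi := by
        have h1 : ∫⁻ θi, (↑‖bf θi - bg θi‖₊ : ℝ≥0∞) ^ p.toReal ∂ηi
            ≤ ∫⁻ θi, (∫⁻ t, ENNReal.ofReal (S (recomb n d i θi t)) ∂cond θi) ^ p.toReal ∂ηi := by
          apply lintegral_mono_ae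
          filter_upwards [hkey] with θi hb
          exact ENNReal.rpow_le_rpow hb hr0
        have h2 : ∫⁻ θi, (∫⁻ t, ENNReal.ofReal (S (recomb n d i θi t)) ∂cond θi) ^ p.toReal ∂ηi
            ≤ ∫⁻ θi, ∫⁻ t, ENNReal.ofReal (S (recomb n d i θi t)) ^ p.toReal ∂cond θi ∂ηi := by
          apply lintegral_mono
          intro θi
          haveI := hprob θi
          exact aux_jensen (cond θi)
            (ENNReal.measurable_ofReal.comp (hSmeas.comp (hrecomb_meas θi))) hr1
        exact h1.trans h2
      refine hstep.trans (le_of_eq ?_)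
      have hgm : Measurable (fun θ : ∀ k, Ty n d k => ENNReal.ofReal (S θ) ^ p.toReal) :=
        (ENNReal.measurable_ofReal.comp hSmeas).pow_const _
      have hdi := hdisint _ hgm
      rw [← hdi]
      apply lintegral_congr
      intro θ
      rw [← Real.enorm_eq_ofReal (hS0 θ)]
  exact hmain.trans htail
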